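/- arXiv:1608.03818 — 2 statements merged into one kernel-verified Lean document; each statement's English description precedes it below -/
import Mathlib

section
/- Let H be a real Hilbert space, a, b > 0 constants, and p, u : [0,T] → H continuously differentiable with a⟨p'(t), p(t)⟩ + b⟨u'(t), u(t)⟩ ≤ (‖f(t)‖·‖p(t)‖ + ‖g(t)‖·‖u(t)‖) for continuous f, g. Then √(a‖p(t)‖² + b‖u(t)‖²) ≤ √(a‖p(0)‖² + b‖u(0)‖²) + max(a⁻¹ᐟ², b⁻¹ᐟ²)·∫₀ᵗ (‖f(s)‖ + ‖g(s)‖) ds. -/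
open scoped RealInnerProductSpace

theorem stmt_1
    {H : Type*} [NormedAddCommGroup H] [InnerProductSpace ℝ H] [CompleteSpace H]
    (T a b : ℝ) (hT : 0 < T) (ha : 0 < a) (hb : 0 < b)
    (p u p' u' f g : ℝ → H)
    (hp : ∀ t, HasDerivAt p (p' t) t) (hu : ∀ t, HasDerivAt u (u' t) t)
    (hp' : Continuous p') (hu' : Continuous u')
    (hf : Continuous f) (hg : Continuous g)
    (hsys : ∀ t, a * ⟪p' t, p t⟫ + b * ⟪u' t, u t⟫ ≤ ‖f t‖ * ‖p t‖ + ‖g t‖ * ‖u t‖) :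
    ∀ t ∈ Set.Icc (0 : ℝ) T,
      Real.sqrt (a * ‖p t‖ ^ 2 + b * ‖u t‖ ^ 2) ≤
        Real.sqrt (a * ‖p 0‖ ^ 2 + b * ‖u 0‖ ^ 2) +
          max (Real.sqrt a)⁻¹ (Real.sqrt b)⁻¹ * ∫ s in (0 : ℝ)..t, (‖f s‖ + ‖g s‖) := by
  intro t ht
  obtain ⟨ht0, htT⟩ := ht
  set M := max (Real.sqrt a)⁻¹ (Real.sqrt b)⁻¹ with hM
  have hsa : 0 < Real.sqrt a := Real.sqrt_pos.2 ha
  have hsb : 0 < Real.sqrt b := Real.sqrt_pos.2 hb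
  have hMa : (Real.sqrt a)⁻¹ ≤ M := le_max_left _ _
  have hMb : (Real.sqrt b)⁻¹ ≤ M := le_max_right _ _
  have hpc : Continuous p := continuous_iff_continuousAt.mpr fun s => (hp s).continuousAt
  have huc : Continuous u := continuous_iff_continuousAt.mpr fun s => (hu s).continuousAt
  set N : ℝ → ℝ := fun s => a * ‖p s‖ ^ 2 + b * ‖u s‖ ^ 2 with hNdef
  have hN : ∀ s, HasDerivAt N (2 * (a * ⟪p' s, p s⟫ + b * ⟪u' s, u s⟫)) s := by
    intro s
    have h3 := (((hp s).inner ℝ (hp s)).const_mul a).add (((hu s).inner ℝ (hu s)).const_mul b)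
    simp only [real_inner_self_eq_norm_sq] at h3
    refine h3.congr_deriv ?_
    rw [real_inner_comm (p' s) (p s), real_inner_comm (u' s) (u s)]
    ring
  have hNc : Continuous N := by
    exact (continuous_const.mul ((hpc.norm).pow 2)).add (continuous_const.mul ((huc.norm).pow 2))
  have hNnn : ∀ s, 0 ≤ N s := fun s => by positivity
  apply le_of_forall_pos_le_add
  intro ε hε
  set δ := ε ^ 2 with hδdef
  have hδ : 0 < δ := by positivity
  set φ : ℝ → ℝ := fun s => Real.sqrt (N s + δ) with hφdef
  have hNpos : ∀ s, 0 < N s + δ := fun s => by have := hNnn s; linarith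
  have hφpos : ∀ s, 0 < φ s := fun s => Real.sqrt_pos.2 (hNpos s)
  set D : ℝ → ℝ := fun s => (a * ⟪p' s, p s⟫ + b * ⟪u' s, u s⟫) / φ s with hDdef
  have hφ : ∀ s, HasDerivAt φ (D s) s := by
    intro s
    have h0 : N s + δ ≠ 0 := (hNpos s).ne'
    have := (Real.hasDerivAt_sqrt h0).comp s ((hN s).add_const δ)
    refine this.congr_deriv ?_
    have hφne : Real.sqrt (N s + δ) ≠ 0 := (hφpos s).ne'
    rw [hDdef, hφdef]
    field_simp [hDdef, hφdef]
  have hbound : ∀ s, D s ≤ M * (‖f s‖ + ‖g s‖) := by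
    intro s
    rw [hDdef]
    rw [div_le_iff₀ (hφpos s)]
    have hφsq : (φ s) ^ 2 = N s + δ := Real.sq_sqrt (hNpos s).le
    have hp_le : ‖p s‖ ≤ M * φ s := by
      have h1 : a * ‖p s‖ ^ 2 ≤ (φ s) ^ 2 := by
        rw [hφsq]
        have : 0 ≤ b * ‖u s‖ ^ 2 := by positivity
        simp only [hNdef]
        linarith
      have h2 : Real.sqrt (a * ‖p s‖ ^ 2) ≤ Real.sqrt ((φ s) ^ 2) := Real.sqrt_le_sqrt h1
      rw [Real.sqrt_mul ha.le, Real.sqrt_sq (norm_nonneg _), Real.sqrt_sq (hφpos s).le] at h2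
      have h3 : ‖p s‖ ≤ (Real.sqrt a)⁻¹ * φ s := by
        rw [inv_mul_eq_div, le_div_iff₀ hsa]
        linarith [h2]
      exact h3.trans (by gcongr)
    have hu_le : ‖u s‖ ≤ M * φ s := by
      have h1 : b * ‖u s‖ ^ 2 ≤ (φ s) ^ 2 := by
        rw [hφsq]
        have : 0 ≤ a * ‖p s‖ ^ 2 := by positivity
        simp only [hNdef]
        linarith
      have h2 : Real.sqrt (b * ‖u s‖ ^ 2) ≤ Real.sqrt ((φ s) ^ 2) := Real.sqrt_le_sqrt h1
      rw [Real.sqrt_mul hb.le, Real.sqrt_sq (norm_nonneg _), Real.sqrt_sq (hφpos s).le] at h2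
      have h3 : ‖u s‖ ≤ (Real.sqrt b)⁻¹ * φ s := by
        rw [inv_mul_eq_div, le_div_iff₀ hsb]
        linarith [h2]
      exact h3.trans (by gcongr)
    calc a * ⟪p' s, p s⟫ + b * ⟪u' s, u s⟫ ≤ ‖f s‖ * ‖p s‖ + ‖g s‖ * ‖u s‖ := hsys s
      _ ≤ ‖f s‖ * (M * φ s) + ‖g s‖ * (M * φ s) := by gcongr
      _ = M * (‖f s‖ + ‖g s‖) * φ s := by ring
  have hφc : Continuous φ :=
    Real.continuous_sqrt.comp (hNc.add continuous_const)
  have hDc : Continuous D := by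
    apply Continuous.div
    · exact (continuous_const.mul (hp'.inner hpc)).add (continuous_const.mul (hu'.inner huc))
    · exact hφc
    · exact fun s => (hφpos s).ne'
  have hfg : Continuous (fun s => M * (‖f s‖ + ‖g s‖)) :=
    continuous_const.mul (hf.norm.add hg.norm)
  have hFTC : ∫ s in (0:ℝ)..t, D s = φ t - φ 0 :=
    intervalIntegral.integral_eq_sub_of_hasDerivAt (fun s _ => hφ s)
      (hDc.intervalIntegrable 0 t)
  have hmono : ∫ s in (0:ℝ)..t, D s ≤ ∫ s in (0:ℝ)..t, M * (‖f s‖ + ‖g s‖) :=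
    intervalIntegral.integral_mono_on ht0 (hDc.intervalIntegrable 0 t)
      (hfg.intervalIntegrable 0 t) (fun s _ => hbound s)
  have hpull : ∫ s in (0:ℝ)..t, M * (‖f s‖ + ‖g s‖) = M * ∫ s in (0:ℝ)..t, (‖f s‖ + ‖g s‖) :=
    intervalIntegral.integral_const_mul _ _
  have h1 : Real.sqrt (N t) ≤ φ t :=
    Real.sqrt_le_sqrt (by linarith [hδ])
  have h2 : φ 0 ≤ Real.sqrt (N 0) + ε := by
    have hle : N 0 + δ ≤ (Real.sqrt (N 0) + ε) ^ 2 := by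
      have hs := Real.sq_sqrt (hNnn 0)
      nlinarith [Real.sqrt_nonneg (N 0)]
    have := Real.sqrt_le_sqrt hle
    rwa [Real.sqrt_sq (by positivity)] at this
  have h3 : φ t ≤ φ 0 + M * ∫ s in (0:ℝ)..t, (‖f s‖ + ‖g s‖) := by
    rw [← hpull]
    linarith [hFTC ▸ hmono]
  show Real.sqrt (N t) ≤ Real.sqrt (N 0) + M * (∫ s in (0:ℝ)..t, (‖f s‖ + ‖g s‖)) + ε
  linarith
end

section
/- Let a, b > 0 and let Q, V be finite-dimensional real inner product spaces with a linear map D : V → Q (the discrete divergence) and its adjoint-type pairing: suppose sequences p⁰,…,p^N ∈ Q and u⁰,…,u^N ∈ V satisfy, for all n ≥ 1, a⟨(pⁿ − pⁿ⁻¹)/τ, q⟩ + ⟨D((uⁿ+uⁿ⁻¹)/2), q⟩ = ⟨fⁿ, q⟩ for all q ∈ Q, and b⟨(uⁿ − uⁿ⁻¹)/τ, v⟩ − ⟨(pⁿ+pⁿ⁻¹)/2, Dv⟩ = ⟨gⁿ, v⟩ for all v ∈ V. Then for all n, a‖pⁿ‖² + b‖uⁿ‖² ≤ (√(a‖p⁰‖²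 + b‖u⁰‖²) + max(a⁻¹ᐟ²,b⁻¹ᐟ²)·Σ_{k=1}^{n} τ(‖f^k‖ + ‖g^k‖))². -/
open scoped RealInnerProductSpace

lemma stmt9_aux_inner {E : Type*} [NormedAddCommGroup E] [InnerProductSpace ℝ E] (x y : E) :
    ⟪x - y, x + y⟫ = ‖x‖ ^ 2 - ‖y‖ ^ 2 := by
  rw [inner_sub_left, inner_add_right, inner_add_right, real_inner_self_eq_norm_sq,
    real_inner_self_eq_norm_sq, real_inner_comm y x]
  ring

theorem stmt_9
    {Q V : Type*} [NormedAddCommGroup Q] [InnerProductSpace ℝ Q] [FiniteDimensional ℝ Q]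
    [NormedAddCommGroup V] [InnerProductSpace ℝ V] [FiniteDimensional ℝ V]
    (a b τ : ℝ) (ha : 0 < a) (hb : 0 < b) (hτ : 0 < τ)
    (N : ℕ) (D : V →ₗ[ℝ] Q)
    (p f : ℕ → Q) (u g : ℕ → V)
    (h1 : ∀ n, 1 ≤ n → n ≤ N → ∀ q : Q,
      a * ⟪τ⁻¹ • (p n - p (n - 1)), q⟫ + ⟪D ((2 : ℝ)⁻¹ • (u n + u (n - 1))), q⟫ = ⟪f n, q⟫)
    (h2 : ∀ n, 1 ≤ n → n ≤ N → ∀ v : V,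
      b * ⟪τ⁻¹ • (u n - u (n - 1)), v⟫ - ⟪(2 : ℝ)⁻¹ • (p n + p (n - 1)), D v⟫ = ⟪g n, v⟫) :
    ∀ n ≤ N,
      a * ‖p n‖ ^ 2 + b * ‖u n‖ ^ 2 ≤
        (Real.sqrt (a * ‖p 0‖ ^ 2 + b * ‖u 0‖ ^ 2) +
          max (Real.sqrt a)⁻¹ (Real.sqrt b)⁻¹ *
            ∑ k ∈ Finset.Icc 1 n, τ * (‖f k‖ + ‖g k‖)) ^ 2 := by
  set M : ℝ := max (Real.sqrt a)⁻¹ (Real.sqrt b)⁻¹ with hM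
  set E : ℕ → ℝ := fun n => Real.sqrt (a * ‖p n‖ ^ 2 + b * ‖u n‖ ^ 2) with hE
  have hEnn : ∀ k, 0 ≤ E k := fun k => Real.sqrt_nonneg _
  have hEsq : ∀ k, E k ^ 2 = a * ‖p k‖ ^ 2 + b * ‖u k‖ ^ 2 := fun k =>
    Real.sq_sqrt (by positivity)
  have hMnn : 0 ≤ M := le_trans (by positivity : (0:ℝ) ≤ (Real.sqrt a)⁻¹) (le_max_left _ _)
  have hpE : ∀ k, ‖p k‖ ≤ M * E k := by
    intro k
    have h1' : Real.sqrt (a * ‖p k‖ ^ 2) ≤ E k :=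
      Real.sqrt_le_sqrt (by nlinarith [norm_nonneg (u k), sq_nonneg ‖u k‖])
    rw [Real.sqrt_mul ha.le, Real.sqrt_sq (norm_nonneg _)] at h1'
    have hsa : 0 < Real.sqrt a := Real.sqrt_pos.mpr ha
    calc ‖p k‖ = (Real.sqrt a)⁻¹ * (Real.sqrt a * ‖p k‖) := by field_simp
    _ ≤ (Real.sqrt a)⁻¹ * E k := by
        apply mul_le_mul_of_nonneg_left h1' (by positivity)
    _ ≤ M * E k := mul_le_mul_of_nonneg_right (le_max_left _ _) (hEnn k)
  have huE : ∀ k, ‖u k‖ ≤ M * E k := by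
    intro k
    have h1' : Real.sqrt (b * ‖u k‖ ^ 2) ≤ E k :=
      Real.sqrt_le_sqrt (by nlinarith [norm_nonneg (p k), sq_nonneg ‖p k‖])
    rw [Real.sqrt_mul hb.le, Real.sqrt_sq (norm_nonneg _)] at h1'
    have hsb : 0 < Real.sqrt b := Real.sqrt_pos.mpr hb
    calc ‖u k‖ = (Real.sqrt b)⁻¹ * (Real.sqrt b * ‖u k‖) := by field_simp
    _ ≤ (Real.sqrt b)⁻¹ * E k := by
        apply mul_le_mul_of_nonneg_left h1' (by positivity)
    _ ≤ M * E k := mul_le_mul_of_nonneg_right (le_max_right _ _) (hEnn k)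
  have step : ∀ m, 1 ≤ m → m ≤ N →
      E m ≤ E (m - 1) + M * (τ * (‖f m‖ + ‖g m‖)) := by
    intro m hm1 hmN
    have e1 := h1 m hm1 hmN (p m + p (m - 1))
    have e2 := h2 m hm1 hmN (u m + u (m - 1))
    rw [real_inner_smul_left, stmt9_aux_inner, map_smul, real_inner_smul_left] at e1
    rw [real_inner_smul_left, stmt9_aux_inner, real_inner_smul_left] at e2
    have hsym : ⟪(D (u m + u (m - 1)) : Q), p m + p (m - 1)⟫ =
        ⟪p m + p (m - 1), D (u m + u (m - 1))⟫ := real_inner_comm _ _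
    have hcomb : a * (τ⁻¹ * (‖p m‖ ^ 2 - ‖p (m - 1)‖ ^ 2)) +
        b * (τ⁻¹ * (‖u m‖ ^ 2 - ‖u (m - 1)‖ ^ 2)) =
        ⟪f m, p m + p (m - 1)⟫ + ⟪g m, u m + u (m - 1)⟫ := by
      rw [hsym] at e1
      linarith [e1, e2]
    have hbf : ⟪f m, p m + p (m - 1)⟫ ≤ ‖f m‖ * (M * (E m + E (m - 1))) := by
      calc ⟪f m, p m + p (m - 1)⟫ ≤ ‖f m‖ * ‖p m + p (m - 1)‖ := real_inner_le_norm _ _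
      _ ≤ ‖f m‖ * (M * (E m + E (m - 1))) := by
          apply mul_le_mul_of_nonneg_left _ (norm_nonneg _)
          calc ‖p m + p (m - 1)‖ ≤ ‖p m‖ + ‖p (m - 1)‖ := norm_add_le _ _
          _ ≤ M * E m + M * E (m - 1) := add_le_add (hpE m) (hpE (m - 1))
          _ = M * (E m + E (m - 1)) := by ring
    have hbg : ⟪g m, u m + u (m - 1)⟫ ≤ ‖g m‖ * (M * (E m + E (m - 1))) := by
      calc ⟪g m, u m + u (m - 1)⟫ ≤ ‖g m‖ * ‖u m + u (m - 1)‖ := real_inner_le_norm _ _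
      _ ≤ ‖g m‖ * (M * (E m + E (m - 1))) := by
          apply mul_le_mul_of_nonneg_left _ (norm_nonneg _)
          calc ‖u m + u (m - 1)‖ ≤ ‖u m‖ + ‖u (m - 1)‖ := norm_add_le _ _
          _ ≤ M * E m + M * E (m - 1) := add_le_add (huE m) (huE (m - 1))
          _ = M * (E m + E (m - 1)) := by ring
    have hineq : E m ^ 2 - E (m - 1) ^ 2 ≤
        M * (τ * (‖f m‖ + ‖g m‖)) * (E m + E (m - 1)) := by
      have h3 : E m ^ 2 - E (m - 1) ^ 2 =
          τ * (a * (τ⁻¹ * (‖p m‖ ^ 2 - ‖p (m - 1)‖ ^ 2)) +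
            b * (τ⁻¹ * (‖u m‖ ^ 2 - ‖u (m - 1)‖ ^ 2))) := by
        rw [hEsq, hEsq]
        field_simp
        ring
      rw [h3, hcomb]
      nlinarith [hbf, hbg, hτ]
    have hC : 0 ≤ M * (τ * (‖f m‖ + ‖g m‖)) := by positivity
    nlinarith [hEnn m, hEnn (m - 1), hC, hineq]
  have main : ∀ m, m ≤ N →
      E m ≤ E 0 + M * ∑ k ∈ Finset.Icc 1 m, τ * (‖f k‖ + ‖g k‖) := by
    intro m
    induction m with
    | zero => intro _; simp
    | succ m ih =>
      intro hm
      have hm' : m ≤ N := Nat.le_of_succ_le hm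
      have ihm := ih hm'
      have hs := step (m + 1) (Nat.le_add_left 1 m) hm
      simp only [Nat.add_sub_cancel] at hs
      rw [Finset.sum_Icc_succ_top (by omega : 1 ≤ m + 1)]
      have := mul_le_mul_of_nonneg_left
        (le_refl (τ * (‖f (m + 1)‖ + ‖g (m + 1)‖))) hMnn
      linarith [hs, ihm, mul_add M (∑ k ∈ Finset.Icc 1 m, τ * (‖f k‖ + ‖g k‖))
        (τ * (‖f (m + 1)‖ + ‖g (m + 1)‖))]
  intro n hn
  have hfin := main n hn
  have heq : a * ‖p n‖ ^ 2 + b * ‖u n‖ ^ 2 = E n ^ 2 := (hEsq n).symm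
  rw [heq]
  have hrhs : (0:ℝ) ≤ E 0 + M * ∑ k ∈ Finset.Icc 1 n, τ * (‖f k‖ + ‖g k‖) := by
    have : 0 ≤ M * ∑ k ∈ Finset.Icc 1 n, τ * (‖f k‖ + ‖g k‖) := by
      apply mul_nonneg hMnn
      apply Finset.sum_nonneg
      intro i _
      positivity
    linarith [hEnn 0]
  exact pow_le_pow_left₀ (hEnn n) hfin 2
end
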